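/- arXiv:2008.06542 — 4 statements merged into one kernel-verified Lean document; each statement's English description precedes it below -/
import Mathlib

section
/- (Adaptive Shrinkage Property) Let r̂ : [0,∞) → [0,∞) be a concave, non-decreasing function with r̂(0) = 0 that is differentiable on (0,∞), and let λ ≥ 0. Let Z ∈ ℝ^{m×n} (m ≥ n) have singular values σ₁(Z) ≥ σ₂(Z) ≥ … ≥ σ_n(Z) ≥ 0, and for each i let σ̃ᵢ be a global minimizer of x ↦ (1/2)(x − σᵢ(Z))² + λ·r̂(|x|), chosen so that σ̃₁ ≥ σ̃₂ ≥ … ≥ σ̃_n. Then: (i) σᵢ(Z) ≥ σ̃ᵢ ≥ 0 for every i (shrinkage); and (ii) for every i with σ̃_{i+1} > 0, σᵢ(Z) − σ̃ᵢ ≤ σ_{i+1}(Z) − σ̃_{i+1} (adaptivity, i.e., larger singular values are penalized less). -/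
open scoped Matrix

lemma concave_two_point {f : ℝ → ℝ} (hf : ConcaveOn ℝ (Set.Ici (0:ℝ)) f)
    {t s h : ℝ} (hth : 0 ≤ t - h) (hts : t ≤ s) (hh : 0 < h) :
    f (t - h) + f (s + h) ≤ f t + f s := by
  have hD : (0:ℝ) < s - t + 2 * h := by linarith
  set μ : ℝ := (s - t + h) / (s - t + 2 * h) with hμdef
  have hμ0 : 0 ≤ μ := div_nonneg (by linarith) hD.le
  have hμle : μ ≤ 1 := by
    rw [hμdef, div_le_one hD]; linarith
  have hμ0' : (0:ℝ) ≤ 1 - μ := by linarith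
  have hx : (t - h) ∈ Set.Ici (0:ℝ) := hth
  have hy : (s + h) ∈ Set.Ici (0:ℝ) := by
    simp only [Set.mem_Ici]; linarith
  have h1 := hf.2 hx hy hμ0 hμ0' (by ring : μ + (1 - μ) = 1)
  have h2 := hf.2 hx hy hμ0' hμ0 (by ring : (1 - μ) + μ = 1)
  have e1 : μ • (t - h) + (1 - μ) • (s + h) = t := by
    have key : μ * (s - t + 2 * h) = s - t + h := by
      rw [hμdef]; exact div_mul_cancel₀ _ hD.ne'
    simp only [smul_eq_mul]; linear_combination (-1:ℝ) * key
  have e2 : (1 - μ) • (t - h) + μ • (s + h) = s := by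
    have key : μ * (s - t + 2 * h) = s - t + h := by
      rw [hμdef]; exact div_mul_cancel₀ _ hD.ne'
    simp only [smul_eq_mul]; linear_combination key
  rw [e1] at h1
  rw [e2] at h2
  simp only [smul_eq_mul] at h1 h2
  nlinarith [h1, h2]


/-- Adaptive Shrinkage Property: Let `Z` be an `m × n` real matrix
(`m ≥ n`) with singular value decomposition `Z = U ⬝ diagonal σ ⬝ Vᵀ`
(`U` with orthonormal columns, `V` orthogonal, `σ` non-increasing and non-negative),
let `r̂ : [0,∞) → [0,∞)` be concave, non-decreasing, `r̂ 0 = 0`, differentiable on `(0,∞)`,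
and `λ ≥ 0`. For each `i`, let `σ̃ᵢ` be a global minimizer of
`x ↦ (1/2)(x - σᵢ)² + λ·r̂(|x|)`, chosen so that `σ̃` is non-increasing. Then:
(i) `σᵢ ≥ σ̃ᵢ ≥ 0` for all `i` (shrinkage), and
(ii) whenever `σ̃_{i+1} > 0`, `σᵢ - σ̃ᵢ ≤ σ_{i+1} - σ̃_{i+1}` (adaptivity). -/
theorem adaptive_shrinkage_property
    {m n : ℕ} (hmn : n ≤ m)
    (rhat : ℝ → ℝ)
    (hr_nonneg : ∀ x : ℝ, 0 ≤ x → 0 ≤ rhat x)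
    (hr_mono : ∀ x y : ℝ, 0 ≤ x → x ≤ y → rhat x ≤ rhat y)
    (hr_zero : rhat 0 = 0)
    (hr_concave : ConcaveOn ℝ (Set.Ici (0 : ℝ)) rhat)
    (hr_diff : DifferentiableOn ℝ rhat (Set.Ioi (0 : ℝ)))
    (lam : ℝ) (hlam : 0 ≤ lam)
    (Z U : Matrix (Fin m) (Fin n) ℝ) (V : Matrix (Fin n) (Fin n) ℝ)
    (σ : Fin n → ℝ)
    (hU : Uᵀ * U = 1) (hV : Vᵀ * V = 1)
    (hSVD : Z = U * Matrix.diagonal σ * Vᵀ)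
    (hσ_nonneg : ∀ i, 0 ≤ σ i)
    (hσ_sorted : ∀ i j : Fin n, i ≤ j → σ j ≤ σ i)
    (σt : Fin n → ℝ)
    (hσt_min : ∀ i : Fin n, ∀ x : ℝ,
      (1 / 2) * (σt i - σ i) ^ 2 + lam * rhat |σt i|
        ≤ (1 / 2) * (x - σ i) ^ 2 + lam * rhat |x|)
    (hσt_sorted : ∀ i j : Fin n, i ≤ j → σt j ≤ σt i) :
    (∀ i : Fin n, 0 ≤ σt i ∧ σt i ≤ σ i) ∧
    (∀ i j : Fin n, (j : ℕ) = (i : ℕ) + 1 → 0 < σt j →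
      σ i - σt i ≤ σ j - σt j) := by

  have part1 : ∀ i : Fin n, 0 ≤ σt i ∧ σt i ≤ σ i := by
    intro i
    have ha : 0 ≤ σ i := hσ_nonneg i
    have hnn : 0 ≤ σt i := by
      by_contra hs
      push_neg at hs
      have h1 := hσt_min i (-(σt i))
      have h2 := hσt_min i 0
      rw [abs_neg] at h1
      rw [abs_zero, hr_zero] at h2
      have hr1 : 0 ≤ rhat |σt i| := hr_nonneg _ (abs_nonneg _)
      have hr2 : 0 ≤ lam * rhat |σt i| := mul_nonneg hlam hr1
      nlinarith [mul_nonneg ha (neg_nonneg.mpr hs.le)]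
    refine ⟨hnn, ?_⟩
    by_contra hgt
    push_neg at hgt
    have h1 := hσt_min i (σ i)
    rw [abs_of_nonneg hnn, abs_of_nonneg ha, sub_self] at h1
    have hmono : rhat (σ i) ≤ rhat (σt i) := hr_mono _ _ ha hgt.le
    nlinarith [mul_le_mul_of_nonneg_left hmono hlam]
  refine ⟨part1, ?_⟩
  intro i j hij hjt
  have hle : i ≤ j := by
    rw [Fin.le_def]; omega
  have hba : σ j ≤ σ i := hσ_sorted i j hle
  have hts : σt j ≤ σt i := hσt_sorted i j hle
  have hsa : σt i ≤ σ i := (part1 i).2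
  have htb : σt j ≤ σ j := (part1 j).2
  have hst : 0 < σt i := lt_of_lt_of_le hjt hts
  by_contra hcon
  push_neg at hcon
  set ε : ℝ := (σ i - σt i) - (σ j - σt j) with hεdef
  have hε : 0 < ε := by simp only [hεdef]; linarith
  set h : ℝ := min (σt j / 2) (ε / 2) with hhdef
  have hh : 0 < h := lt_min (by linarith) (by linarith)
  have hht : h ≤ σt j / 2 := min_le_left _ _
  have hhε : h < ε := lt_of_le_of_lt (min_le_right _ _) (by linarith)
  have h1 := hσt_min i (σt i + h)
  have h2 := hσt_min j (σt j - h)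
  rw [abs_of_nonneg hst.le, abs_of_nonneg (by linarith : (0:ℝ) ≤ σt i + h)] at h1
  rw [abs_of_nonneg hjt.le, abs_of_nonneg (by linarith : (0:ℝ) ≤ σt j - h)] at h2
  have hconc : rhat (σt j - h) + rhat (σt i + h) ≤ rhat (σt j) + rhat (σt i) :=
    concave_two_point hr_concave (by linarith) hts hh
  have hconc' := mul_le_mul_of_nonneg_left hconc hlam
  nlinarith [mul_pos hh (sub_pos.mpr hhε)]
end

section
/- Let Z ∈ ℝ^{m×n} with m ≥ n have a singular value decomposition Z = Ū · Diag(σ(Z)) · V̄ᵀ, where Ū ∈ ℝ^{m×n} has orthonormal columns, V̄ ∈ ℝ^{n×n} is orthogonal, and σ(Z) ∈ ℝⁿ is the vector of singular values in non-increasing order. Let 0 < λ ≤ σ₁(Z), and let σ̃ ∈ ℝⁿ be a global minimizer of the vector problem σ ↦ (1/2)‖σ − σ(Z)‖₂² + λ(‖σ‖₁ − ‖σ‖₂). Then the matrix X̃ = Ū · Diag(σ̃) · V̄ᵀ is a global minimizer over X ∈ ℝ^{m×n} of X ↦ (1/2)‖X − Z‖_F² + λ(‖X‖_* − ‖X‖_F);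 i.e., the proximal operator of the NNFN regularizer is obtained by applying the proximal operator of the ℓ₁-minus-ℓ₂ penalty to the singular values of Z. -/
open scoped Matrix

/-- Frobenius norm of a real matrix. -/
noncomputable def frobNorm {m n : ℕ} (X : Matrix (Fin m) (Fin n) ℝ) : ℝ :=
  Real.sqrt (∑ i, ∑ j, (X i j) ^ 2)

/-- Nuclear norm of a real matrix: the sum of its singular values, i.e. the sum of the
square roots of the eigenvalues of `Xᴴ * X`. -/
noncomputable def nuclearNorm {m n : ℕ} (X : Matrix (Fin m) (Fin n) ℝ) : ℝ :=
  ∑ i, Real.sqrt ((Matrix.isHermitian_conjTranspose_mul_self X).eigenvalues i)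

open Matrix Polynomial



lemma charpoly_conj_orth {n : ℕ} (V A : Matrix (Fin n) (Fin n) ℝ) (hV : Vᵀ * V = 1) :
    (V * A * Vᵀ).charpoly = A.charpoly := by
  have hV' : V * Vᵀ = 1 := mul_eq_one_comm.mp hV
  unfold Matrix.charpoly
  have hsc : C.mapMatrix V * (Matrix.scalar (Fin n) (X : ℝ[X])) * C.mapMatrix Vᵀ =
      Matrix.scalar (Fin n) (X : ℝ[X]) := by
    rw [mul_assoc, scalar_apply, ← smul_eq_diagonal_mul, mul_smul_comm, ← RingHom.map_mul, hV',
      RingHom.map_one]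
    rw [smul_eq_diagonal_mul, mul_one]
  have hcm : charmatrix (V * A * Vᵀ) =
      C.mapMatrix V * charmatrix A * C.mapMatrix Vᵀ := by
    unfold charmatrix
    rw [mul_sub, sub_mul, RingHom.map_mul, RingHom.map_mul, hsc]
  rw [hcm, det_mul, det_mul, mul_comm ((C.mapMatrix V).det), mul_assoc, ← det_mul,
    ← RingHom.map_mul, hV', RingHom.map_one, det_one, mul_one]

lemma charpoly_diagonal' {n : ℕ} (d : Fin n → ℝ) :
    (Matrix.diagonal d).charpoly = ∏ i, (X - C (d i)) := by
  unfold Matrix.charpoly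
  have : charmatrix (Matrix.diagonal d) = Matrix.diagonal (fun i => X - C (d i)) := by
    ext i j
    by_cases h : i = j
    · subst h; simp
    · simp [h, charmatrix_apply_ne _ _ _ h, Matrix.diagonal_apply_ne _ h]
  rw [this, det_diagonal]

lemma eigenvalues_multiset {n : ℕ} {A : Matrix (Fin n) (Fin n) ℝ} (hA : A.IsHermitian)
    (V : Matrix (Fin n) (Fin n) ℝ) (d : Fin n → ℝ) (hV : Vᵀ * V = 1)
    (hAe : A = V * Matrix.diagonal d * Vᵀ) :
    (Finset.univ.val.map hA.eigenvalues) = Finset.univ.val.map d := by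
  have key : ∀ (W : Matrix (Fin n) (Fin n) ℝ) (e : Fin n → ℝ), Wᵀ * W = 1 →
      A = W * Matrix.diagonal e * Wᵀ →
      A.charpoly = ((Finset.univ.val.map e).map (fun a => X - C a)).prod := by
    intro W e hW hAe'
    rw [hAe', charpoly_conj_orth _ _ hW, charpoly_diagonal']
    rw [Finset.prod, Multiset.map_map]
    rfl
  have h1 := key V d hV hAe
  have hWmem := hA.eigenvectorUnitary.prop.1
  have hW : (hA.eigenvectorUnitary : Matrix (Fin n) (Fin n) ℝ)ᵀ *
      (hA.eigenvectorUnitary : Matrix (Fin n) (Fin n) ℝ) = 1 := by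
    rw [← conjTranspose_eq_transpose_of_trivial]
    exact hWmem
  have hspec : A = (hA.eigenvectorUnitary : Matrix (Fin n) (Fin n) ℝ) *
      Matrix.diagonal hA.eigenvalues * (hA.eigenvectorUnitary : Matrix (Fin n) (Fin n) ℝ)ᵀ := by
    have := hA.spectral_theorem
    rwa [Unitary.conjStarAlgAut_apply, Matrix.star_eq_conjTranspose,
      conjTranspose_eq_transpose_of_trivial] at this

  have h2 := key _ hA.eigenvalues hW hspec
  have h3 := congrArg Polynomial.roots (h2.symm.trans h1)
  rwa [Polynomial.roots_multiset_prod_X_sub_C, Polynomial.roots_multiset_prod_X_sub_C] at h3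

lemma bessel_sum {ι κ : Type*} [Fintype κ] [DecidableEq ι] (T : Finset ι)
    (w : ι → κ → ℝ) (u : κ → ℝ)
    (horth : ∀ i ∈ T, ∀ j ∈ T, i ≠ j → ∑ k, w i k * w j k = 0)
    (hnorm : ∀ i ∈ T, ∑ k, w i k * w i k = 1) :
    ∑ i ∈ T, (∑ k, u k * w i k) ^ 2 ≤ ∑ k, u k ^ 2 := by
  obtain ⟨c, hcdef⟩ : ∃ c : ι → ℝ, ∀ i, c i = ∑ k, u k * w i k := ⟨_, fun _ => rfl⟩
  have h0 : 0 ≤ ∑ k, (u k - ∑ i ∈ T, c i * w i k) ^ 2 :=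
    Finset.sum_nonneg fun k _ => sq_nonneg _
  have hA : ∑ k, u k * ∑ i ∈ T, c i * w i k = ∑ i ∈ T, c i ^ 2 := by
    calc ∑ k, u k * ∑ i ∈ T, c i * w i k
        = ∑ k, ∑ i ∈ T, c i * (u k * w i k) := by
          refine Finset.sum_congr rfl fun k _ => ?_
          rw [Finset.mul_sum]; exact Finset.sum_congr rfl fun i _ => by ring
      _ = ∑ i ∈ T, ∑ k, c i * (u k * w i k) := Finset.sum_comm
      _ = ∑ i ∈ T, c i ^ 2 := by
          refine Finset.sum_congr rfl fun i _ => ?_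
          rw [← Finset.mul_sum, ← hcdef i]; ring
  have hB : ∑ k, (∑ i ∈ T, c i * w i k) ^ 2 = ∑ i ∈ T, c i ^ 2 := by
    calc ∑ k, (∑ i ∈ T, c i * w i k) ^ 2
        = ∑ k, ∑ i ∈ T, (c i * w i k) * (∑ j ∈ T, c j * w j k) := by
          refine Finset.sum_congr rfl fun k _ => ?_
          rw [sq, Finset.sum_mul]
      _ = ∑ i ∈ T, ∑ k, (c i * w i k) * (∑ j ∈ T, c j * w j k) := Finset.sum_comm
      _ = ∑ i ∈ T, ∑ k, ∑ j ∈ T, (c i * c j) * (w i k * w j k) := by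
          refine Finset.sum_congr rfl fun i _ => Finset.sum_congr rfl fun k _ => ?_
          rw [Finset.mul_sum]
          exact Finset.sum_congr rfl fun j _ => by ring
      _ = ∑ i ∈ T, ∑ j ∈ T, ∑ k, (c i * c j) * (w i k * w j k) := by
          exact Finset.sum_congr rfl fun i _ => Finset.sum_comm
      _ = ∑ i ∈ T, ∑ j ∈ T, (c i * c j) * ∑ k, w i k * w j k := by
          refine Finset.sum_congr rfl fun i _ => Finset.sum_congr rfl fun j _ => ?_
          rw [Finset.mul_sum]
      _ = ∑ i ∈ T, c i ^ 2 := by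
          refine Finset.sum_congr rfl fun i hi => ?_
          rw [Finset.sum_eq_single_of_mem i hi]
          · rw [hnorm i hi]; ring
          · intro j hj hji
            rw [horth i hi j hj (Ne.symm hji), mul_zero]
  have hexp : ∑ k, (u k - ∑ i ∈ T, c i * w i k) ^ 2
      = (∑ k, u k ^ 2) - ∑ i ∈ T, c i ^ 2 := by
    have hpt : ∀ k, (u k - ∑ i ∈ T, c i * w i k) ^ 2
        = u k ^ 2 - 2 * (u k * ∑ i ∈ T, c i * w i k) + (∑ i ∈ T, c i * w i k) ^ 2 :=
      fun k => by ring
    rw [Finset.sum_congr rfl fun k _ => hpt k, Finset.sum_add_distrib, Finset.sum_sub_distrib,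
      ← Finset.mul_sum, hA, hB]
    ring
  rw [hexp] at h0
  have : ∑ i ∈ T, (∑ k, u k * w i k) ^ 2 = ∑ i ∈ T, c i ^ 2 :=
    Finset.sum_congr rfl fun i _ => by rw [hcdef i]
  rw [this]
  linarith

lemma substochastic_rearrange (n : ℕ) (s t : ℕ → ℝ) (C : ℕ → ℕ → ℝ)
    (hs : ∀ i j, i ≤ j → j < n → s j ≤ s i) (hs0 : ∀ i, i < n → 0 ≤ s i)
    (ht : ∀ i j, i ≤ j → j < n → t j ≤ t i) (ht0 : ∀ i, i < n → 0 ≤ t i)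
    (hC : ∀ i j, 0 ≤ C i j)
    (hrow : ∀ i, i < n → ∑ j ∈ Finset.range n, C i j ≤ 1)
    (hcol : ∀ j, j < n → ∑ i ∈ Finset.range n, C i j ≤ 1) :
    ∑ i ∈ Finset.range n, ∑ j ∈ Finset.range n, C i j * (s i * t j)
      ≤ ∑ i ∈ Finset.range n, s i * t i := by
  induction n generalizing s t C with
  | zero => simp
  | succ n ih =>
    have hnn : n < n + 1 := Nat.lt_succ_self n
    set S := s n with hS
    set T := t n with hT
    have hS0 : 0 ≤ S := hs0 n hnn
    have hT0 : 0 ≤ T := ht0 n hnn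
    set s' : ℕ → ℝ := fun i => s i - S with hs'
    set t' : ℕ → ℝ := fun j => t j - T with ht'
    have hs'0 : ∀ i, i < n + 1 → 0 ≤ s' i := fun i hi =>
      sub_nonneg.mpr (hs i n (Nat.lt_succ_iff.mp hi) hnn)
    have ht'0 : ∀ j, j < n + 1 → 0 ≤ t' j := fun j hj =>
      sub_nonneg.mpr (ht j n (Nat.lt_succ_iff.mp hj) hnn)
    have hs'n : s' n = 0 := by simp [hs', hS]
    have ht'n : t' n = 0 := by simp [ht', hT]
    -- IH applied to s', t' on range n
    have key : ∑ i ∈ Finset.range n, ∑ j ∈ Finset.range n, C i j * (s' i * t' j)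
        ≤ ∑ i ∈ Finset.range n, s' i * t' i := by
      refine ih s' t' C (fun i j hij hj => sub_le_sub_right (hs i j hij (hj.trans hnn)) S)
        (fun i hi => hs'0 i (hi.trans hnn))
        (fun i j hij hj => sub_le_sub_right (ht i j hij (hj.trans hnn)) T)
        (fun j hj => ht'0 j (hj.trans hnn)) hC ?_ ?_
      · intro i hi
        refine le_trans (Finset.sum_le_sum_of_subset_of_nonneg
          (Finset.range_subset_range.mpr n.le_succ) fun j _ _ => hC i j) (hrow i (hi.trans hnn))
      · intro j hj
        refine le_trans (Finset.sum_le_sum_of_subset_of_nonneg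
          (Finset.range_subset_range.mpr n.le_succ) fun i _ _ => hC i j) (hcol j (hj.trans hnn))
    -- extend key to range (n+1)
    have key' : ∑ i ∈ Finset.range (n+1), ∑ j ∈ Finset.range (n+1), C i j * (s' i * t' j)
        ≤ ∑ i ∈ Finset.range (n+1), s' i * t' i := by
      rw [Finset.sum_range_succ, Finset.sum_range_succ (f := fun i => s' i * t' i), hs'n, ht'n]
      simp only [zero_mul, mul_zero, Finset.sum_const_zero, add_zero]
      calc ∑ i ∈ Finset.range n, ∑ j ∈ Finset.range (n+1), C i j * (s' i * t' j)
          = ∑ i ∈ Finset.range n, ∑ j ∈ Finset.range n, C i j * (s' i * t' j) := by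
            refine Finset.sum_congr rfl fun i _ => ?_
            rw [Finset.sum_range_succ, ht'n]
            simp
        _ ≤ ∑ i ∈ Finset.range n, s' i * t' i := key
    -- row-sum bounds
    have hrowB : ∀ (x : ℕ → ℝ), (∀ i, i < n+1 → 0 ≤ x i) →
        ∑ i ∈ Finset.range (n+1), ∑ j ∈ Finset.range (n+1), C i j * x i
          ≤ ∑ i ∈ Finset.range (n+1), x i := by
      intro x hx
      refine Finset.sum_le_sum fun i hi => ?_
      rw [← Finset.sum_mul]
      exact mul_le_of_le_one_left (hx i (Finset.mem_range.mp hi)) (hrow i (Finset.mem_range.mp hi))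
    have hcolB : ∀ (y : ℕ → ℝ), (∀ j, j < n+1 → 0 ≤ y j) →
        ∑ i ∈ Finset.range (n+1), ∑ j ∈ Finset.range (n+1), C i j * y j
          ≤ ∑ j ∈ Finset.range (n+1), y j := by
      intro y hy
      rw [Finset.sum_comm]
      refine Finset.sum_le_sum fun j hj => ?_
      rw [← Finset.sum_mul]
      exact mul_le_of_le_one_left (hy j (Finset.mem_range.mp hj)) (hcol j (Finset.mem_range.mp hj))
    have hB2 := hrowB (fun i => s' i * T) (fun i hi => mul_nonneg (hs'0 i hi) hT0)
    have hB3 := hcolB (fun j => S * t' j) (fun j hj => mul_nonneg hS0 (ht'0 j hj))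
    have hB4 := hrowB (fun _ => S * T) (fun _ _ => mul_nonneg hS0 hT0)
    -- decompose LHS and RHS
    have hdecL : ∀ i j, C i j * (s i * t j)
        = C i j * (s' i * t' j) + C i j * (s' i * T) + C i j * (S * t' j) + C i j * (S * T) := by
      intro i j; simp only [hs', ht']; ring
    have hdecR : ∀ i, s i * t i = s' i * t' i + s' i * T + S * t' i + S * T := by
      intro i; simp only [hs', ht']; ring
    calc ∑ i ∈ Finset.range (n+1), ∑ j ∈ Finset.range (n+1), C i j * (s i * t j)
        = (∑ i ∈ Finset.range (n+1), ∑ j ∈ Finset.range (n+1), C i j * (s' i * t' j))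
          + (∑ i ∈ Finset.range (n+1), ∑ j ∈ Finset.range (n+1), C i j * (s' i * T))
          + (∑ i ∈ Finset.range (n+1), ∑ j ∈ Finset.range (n+1), C i j * (S * t' j))
          + (∑ i ∈ Finset.range (n+1), ∑ j ∈ Finset.range (n+1), C i j * (S * T)) := by
          rw [← Finset.sum_add_distrib, ← Finset.sum_add_distrib, ← Finset.sum_add_distrib]
          refine Finset.sum_congr rfl fun i _ => ?_
          rw [← Finset.sum_add_distrib, ← Finset.sum_add_distrib, ← Finset.sum_add_distrib]
          exact Finset.sum_congr rfl fun j _ => hdecL i j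
      _ ≤ (∑ i ∈ Finset.range (n+1), s' i * t' i)
          + (∑ i ∈ Finset.range (n+1), s' i * T)
          + (∑ j ∈ Finset.range (n+1), S * t' j)
          + (∑ i ∈ Finset.range (n+1), S * T) := by
          exact add_le_add (add_le_add (add_le_add key' hB2) hB3) hB4
      _ = ∑ i ∈ Finset.range (n+1), s i * t i := by
          rw [← Finset.sum_add_distrib, ← Finset.sum_add_distrib, ← Finset.sum_add_distrib]
          exact (Finset.sum_congr rfl fun i _ => (hdecR i).symm)

lemma sum_sq_eq_trace {m n : ℕ} (A : Matrix (Fin m) (Fin n) ℝ) :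
    ∑ i, ∑ j, (A i j) ^ 2 = Matrix.trace (Aᵀ * A) := by
  rw [Matrix.trace]
  rw [Finset.sum_comm]
  refine Finset.sum_congr rfl fun j _ => ?_
  rw [Matrix.diag_apply, Matrix.mul_apply]
  exact Finset.sum_congr rfl fun i _ => by rw [transpose_apply]; ring

lemma UDV_gram {m n : ℕ} (U : Matrix (Fin m) (Fin n) ℝ) (V : Matrix (Fin n) (Fin n) ℝ)
    (hU : Uᵀ * U = 1) (d e : Fin n → ℝ) :
    (U * Matrix.diagonal d * Vᵀ)ᵀ * (U * Matrix.diagonal e * Vᵀ)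
      = V * Matrix.diagonal (fun i => d i * e i) * Vᵀ := by
  rw [transpose_mul, transpose_mul, transpose_transpose, diagonal_transpose]
  calc V * (Matrix.diagonal d * Uᵀ) * (U * Matrix.diagonal e * Vᵀ)
      = V * Matrix.diagonal d * (Uᵀ * U) * Matrix.diagonal e * Vᵀ := by
        simp only [Matrix.mul_assoc]
    _ = V * Matrix.diagonal (fun i => d i * e i) * Vᵀ := by
        rw [hU, Matrix.mul_one, Matrix.mul_assoc V, diagonal_mul_diagonal]

lemma frob_sq_UDV {m n : ℕ} (U : Matrix (Fin m) (Fin n) ℝ) (V : Matrix (Fin n) (Fin n) ℝ)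
    (hU : Uᵀ * U = 1) (hV : Vᵀ * V = 1) (d : Fin n → ℝ) :
    ∑ i, ∑ j, ((U * Matrix.diagonal d * Vᵀ) i j) ^ 2 = ∑ i, (d i) ^ 2 := by
  rw [sum_sq_eq_trace, UDV_gram U V hU d d, Matrix.trace_mul_cycle, hV, Matrix.one_mul,
    trace_diagonal]
  exact Finset.sum_congr rfl fun i _ => (sq (d i)).symm

lemma sub_sq_sum {m n : ℕ} (A B : Matrix (Fin m) (Fin n) ℝ) :
    ∑ i, ∑ j, ((A - B) i j) ^ 2
      = ∑ i, ∑ j, (A i j) ^ 2 - 2 * (∑ i, ∑ j, A i j * B i j) + ∑ i, ∑ j, (B i j) ^ 2 := by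
  have h : ∀ (i : Fin m), ∑ j, ((A - B) i j) ^ 2
      = ∑ j, (A i j) ^ 2 - 2 * (∑ j, A i j * B i j) + ∑ j, (B i j) ^ 2 := by
    intro i
    rw [Finset.mul_sum, ← Finset.sum_sub_distrib, ← Finset.sum_add_distrib]
    refine Finset.sum_congr rfl fun j _ => ?_
    rw [Matrix.sub_apply]; ring
  rw [Finset.sum_congr rfl fun i _ => h i, Finset.mul_sum, ← Finset.sum_sub_distrib,
    ← Finset.sum_add_distrib]

lemma vec_sub_sq_sum {n : ℕ} (a b : Fin n → ℝ) :
    ∑ i, (a i - b i) ^ 2 = ∑ i, (a i) ^ 2 - 2 * (∑ i, a i * b i) + ∑ i, (b i) ^ 2 := by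
  rw [Finset.mul_sum, ← Finset.sum_sub_distrib, ← Finset.sum_add_distrib]
  exact Finset.sum_congr rfl fun i _ => by ring

lemma sum_dite_fin {n : ℕ} (f : Fin n → ℝ) :
    ∑ k ∈ Finset.range n, (if h : k < n then f ⟨k, h⟩ else 0) = ∑ i : Fin n, f i := by
  rw [← Fin.sum_univ_eq_sum_range (fun k => if h : k < n then f ⟨k, h⟩ else 0) n]
  exact Finset.sum_congr rfl fun i _ => by simp [i.isLt]

lemma substochastic_fin {n : ℕ} (s t : Fin n → ℝ) (C : Fin n → Fin n → ℝ)
    (hs : ∀ i j : Fin n, i ≤ j → s j ≤ s i) (hs0 : ∀ i, 0 ≤ s i)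
    (ht : ∀ i j : Fin n, i ≤ j → t j ≤ t i) (ht0 : ∀ i, 0 ≤ t i)
    (hC : ∀ i j, 0 ≤ C i j) (hrow : ∀ i, ∑ j, C i j ≤ 1) (hcol : ∀ j, ∑ i, C i j ≤ 1) :
    ∑ i, ∑ j, C i j * (s i * t j) ≤ ∑ i, s i * t i := by
  classical
  set S : ℕ → ℝ := fun k => if h : k < n then s ⟨k, h⟩ else 0 with hS
  set T : ℕ → ℝ := fun k => if h : k < n then t ⟨k, h⟩ else 0 with hT
  set D : ℕ → ℕ → ℝ :=
    fun k l => if h : k < n ∧ l < n then C ⟨k, h.1⟩ ⟨l, h.2⟩ else 0 with hD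
  have key := substochastic_rearrange n S T D
    (fun i j hij hj => by
      have hi : i < n := lt_of_le_of_lt hij hj
      simp only [hS, dif_pos hi, dif_pos hj]
      exact hs ⟨i, hi⟩ ⟨j, hj⟩ hij)
    (fun i hi => by simp only [hS, dif_pos hi]; exact hs0 _)
    (fun i j hij hj => by
      have hi : i < n := lt_of_le_of_lt hij hj
      simp only [hT, dif_pos hi, dif_pos hj]
      exact ht ⟨i, hi⟩ ⟨j, hj⟩ hij)
    (fun i hi => by simp only [hT, dif_pos hi]; exact ht0 _)
    (fun i j => by
      by_cases h : i < n ∧ j < n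
      · simp only [hD, dif_pos h]; exact hC _ _
      · simp only [hD, dif_neg h]; exact le_refl 0)
    (fun i hi => by
      have : ∑ j ∈ Finset.range n, D i j
          = ∑ j ∈ Finset.range n, (if h : j < n then C ⟨i, hi⟩ ⟨j, h⟩ else 0) := by
        refine Finset.sum_congr rfl fun j hj => ?_
        have hjn := Finset.mem_range.mp hj
        simp only [hD, dif_pos (And.intro hi hjn), dif_pos hjn]
      rw [this, sum_dite_fin (fun j => C ⟨i, hi⟩ j)]
      exact hrow _)
    (fun j hj => by
      have : ∑ i ∈ Finset.range n, D i j
          = ∑ i ∈ Finset.range n, (if h : i < n then C ⟨i, h⟩ ⟨j, hj⟩ else 0) := by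
        refine Finset.sum_congr rfl fun i hi => ?_
        have hin := Finset.mem_range.mp hi
        simp only [hD, dif_pos (And.intro hin hj), dif_pos hin]
      rw [this, sum_dite_fin (fun i => C i ⟨j, hj⟩)]
      exact hcol _)
  have hL : ∑ i ∈ Finset.range n, ∑ j ∈ Finset.range n, D i j * (S i * T j)
      = ∑ i : Fin n, ∑ j : Fin n, C i j * (s i * t j) := by
    have step : ∑ i ∈ Finset.range n, ∑ j ∈ Finset.range n, D i j * (S i * T j)
        = ∑ i ∈ Finset.range n, (if h : i < n then ∑ j : Fin n, C ⟨i, h⟩ j * (s ⟨i, h⟩ * t j) else 0) := by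
      refine Finset.sum_congr rfl fun i hi => ?_
      have hin := Finset.mem_range.mp hi
      rw [dif_pos hin]
      have : ∑ j ∈ Finset.range n, D i j * (S i * T j)
          = ∑ j ∈ Finset.range n,
              (if h : j < n then C ⟨i, hin⟩ ⟨j, h⟩ * (s ⟨i, hin⟩ * t ⟨j, h⟩) else 0) := by
        refine Finset.sum_congr rfl fun j hj => ?_
        have hjn := Finset.mem_range.mp hj
        simp only [hD, hS, hT, dif_pos (And.intro hin hjn), dif_pos hjn, dif_pos hin]
      rw [this, sum_dite_fin (fun j => C ⟨i, hin⟩ j * (s ⟨i, hin⟩ * t j))]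
    rw [step, sum_dite_fin (fun i => ∑ j : Fin n, C i j * (s i * t j))]
  have hR : ∑ i ∈ Finset.range n, S i * T i = ∑ i : Fin n, s i * t i := by
    have : ∑ i ∈ Finset.range n, S i * T i
        = ∑ i ∈ Finset.range n, (if h : i < n then s ⟨i, h⟩ * t ⟨i, h⟩ else 0) := by
      refine Finset.sum_congr rfl fun i hi => ?_
      have hin := Finset.mem_range.mp hi
      simp only [hS, hT, dif_pos hin]
    rw [this, sum_dite_fin (fun i => s i * t i)]
  rw [hL, hR] at key
  exact key

lemma von_neumann_core {m n : ℕ} (X U : Matrix (Fin m) (Fin n) ℝ)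
    (V Q : Matrix (Fin n) (Fin n) ℝ) (σ s : Fin n → ℝ)
    (hU : Uᵀ * U = 1) (hV : Vᵀ * V = 1) (hQ : Qᵀ * Q = 1)
    (hσ0 : ∀ i, 0 ≤ σ i) (hσs : ∀ i j : Fin n, i ≤ j → σ j ≤ σ i)
    (hs0 : ∀ i, 0 ≤ s i) (hss : ∀ i j : Fin n, i ≤ j → s j ≤ s i)
    (hgram : Qᵀ * (Xᵀ * X) * Q = Matrix.diagonal (fun i => s i ^ 2)) :
    ∑ k, ∑ l, X k l * (U * Matrix.diagonal σ * Vᵀ) k l ≤ ∑ i, s i * σ i := by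
  classical
  have hQQ : Q * Qᵀ = 1 := mul_eq_one_comm.mp hQ
  obtain ⟨w, hwdef⟩ : ∃ w : Fin n → Fin m → ℝ, ∀ i k, w i k = (X * Q) k i :=
    ⟨_, fun _ _ => rfl⟩
  have horthw : ∀ i j, ∑ k, w i k * w j k = if i = j then s i ^ 2 else 0 := by
    intro i j
    have h1 : ((X * Q)ᵀ * (X * Q)) i j = ∑ k, w i k * w j k := by
      rw [Matrix.mul_apply]
      exact Finset.sum_congr rfl fun k _ => by rw [transpose_apply, hwdef, hwdef]
    have h2 : (X * Q)ᵀ * (X * Q) = Matrix.diagonal (fun i => s i ^ 2) := by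
      rw [transpose_mul, ← hgram]
      simp only [Matrix.mul_assoc]
    rw [← h1, h2, Matrix.diagonal_apply]
  have hXd : ∀ k l, X k l = ∑ i, w i k * Q l i := by
    intro k l
    have hX1 : X = X * Q * Qᵀ := by rw [Matrix.mul_assoc, hQQ, Matrix.mul_one]
    conv_lhs => rw [hX1]
    rw [Matrix.mul_apply]
    exact Finset.sum_congr rfl fun i _ => by rw [transpose_apply, hwdef]
  have hZ : ∀ k l, (U * Matrix.diagonal σ * Vᵀ) k l = ∑ j, σ j * (U k j * V l j) := by
    intro k l
    rw [Matrix.mul_apply]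
    refine Finset.sum_congr rfl fun j _ => ?_
    rw [Matrix.mul_diagonal, transpose_apply]
    ring
  obtain ⟨β, hβdef⟩ : ∃ β : Fin n → Fin n → ℝ, ∀ i j, β i j = ∑ l, Q l i * V l j :=
    ⟨_, fun _ _ => rfl⟩
  obtain ⟨γ, hγdef⟩ : ∃ γ : Fin n → Fin n → ℝ, ∀ i j, γ i j = ∑ k, U k j * w i k :=
    ⟨_, fun _ _ => rfl⟩
  have hmain : ∑ k, ∑ l, X k l * (U * Matrix.diagonal σ * Vᵀ) k l
      = ∑ i, ∑ j, σ j * (γ i j * β i j) := by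
    calc ∑ k, ∑ l, X k l * (U * Matrix.diagonal σ * Vᵀ) k l
        = ∑ k, ∑ l, ∑ i, ∑ j, σ j * ((U k j * w i k) * (Q l i * V l j)) := by
          refine Finset.sum_congr rfl fun k _ => Finset.sum_congr rfl fun l _ => ?_
          rw [hXd k l, hZ k l, Finset.sum_mul_sum]
          refine Finset.sum_congr rfl fun i _ => Finset.sum_congr rfl fun j _ => by ring
      _ = ∑ k, ∑ i, ∑ j, ∑ l, σ j * ((U k j * w i k) * (Q l i * V l j)) := by
          refine Finset.sum_congr rfl fun k _ => ?_
          rw [Finset.sum_comm]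
          exact Finset.sum_congr rfl fun i _ => Finset.sum_comm
      _ = ∑ i, ∑ j, ∑ k, ∑ l, σ j * ((U k j * w i k) * (Q l i * V l j)) := by
          rw [Finset.sum_comm]
          exact Finset.sum_congr rfl fun i _ => Finset.sum_comm
      _ = ∑ i, ∑ j, σ j * (γ i j * β i j) := by
          refine Finset.sum_congr rfl fun i _ => Finset.sum_congr rfl fun j _ => ?_
          rw [hγdef, hβdef, Finset.sum_mul_sum, Finset.mul_sum]
          refine Finset.sum_congr rfl fun k _ => ?_
          rw [Finset.mul_sum]
  obtain ⟨α, hαdef⟩ : ∃ α : Fin n → Fin n → ℝ,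
      ∀ i j, α i j = if s i = 0 then 0 else γ i j / s i := ⟨_, fun _ _ => rfl⟩
  obtain ⟨C, hCdef⟩ : ∃ C : Fin n → Fin n → ℝ,
      ∀ i j, C i j = (α i j ^ 2 + β i j ^ 2) / 2 := ⟨_, fun _ _ => rfl⟩
  have hwzero : ∀ i, s i = 0 → ∀ k, w i k = 0 := by
    intro i hsi k
    have h := horthw i i
    rw [if_pos rfl, hsi] at h
    have h0 : ∑ k, w i k * w i k = 0 := by rw [h]; ring
    have := Finset.sum_eq_zero_iff_of_nonneg
      (fun k _ => mul_self_nonneg (w i k)) |>.mp h0 k (Finset.mem_univ k)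
    exact mul_self_eq_zero.mp this
  have hterm : ∀ i j, σ j * (γ i j * β i j) ≤ C i j * (s i * σ j) := by
    intro i j
    by_cases hsi : s i = 0
    · have hγ0 : γ i j = 0 := by
        rw [hγdef]
        exact Finset.sum_eq_zero fun k _ => by rw [hwzero i hsi k, mul_zero]
      rw [hγ0, hsi]
      simp
    · have hsipos : 0 < s i := lt_of_le_of_ne (hs0 i) (Ne.symm hsi)
      have hγval : γ i j = s i * α i j := by
        rw [hαdef, if_neg hsi, mul_div_cancel₀]
        exact hsi
      rw [hγval, hCdef]
      have hab : α i j * β i j ≤ (α i j ^ 2 + β i j ^ 2) / 2 := by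
        nlinarith [sq_nonneg (α i j - β i j)]
      calc σ j * (s i * α i j * β i j) = (s i * σ j) * (α i j * β i j) := by ring
        _ ≤ (s i * σ j) * ((α i j ^ 2 + β i j ^ 2) / 2) :=
            mul_le_mul_of_nonneg_left hab (mul_nonneg (le_of_lt hsipos) (hσ0 j))
        _ = (α i j ^ 2 + β i j ^ 2) / 2 * (s i * σ j) := by ring
  have hVcols : ∀ a b : Fin n, ∑ l, V l a * V l b = if a = b then 1 else 0 := by
    intro a b
    have h : (Vᵀ * V) a b = ∑ l, V l a * V l b := by
      rw [Matrix.mul_apply]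
      exact Finset.sum_congr rfl fun l _ => by rw [transpose_apply]
    rw [← h, hV, Matrix.one_apply]
  have hQcols : ∀ a b : Fin n, ∑ l, Q l a * Q l b = if a = b then 1 else 0 := by
    intro a b
    have h : (Qᵀ * Q) a b = ∑ l, Q l a * Q l b := by
      rw [Matrix.mul_apply]
      exact Finset.sum_congr rfl fun l _ => by rw [transpose_apply]
    rw [← h, hQ, Matrix.one_apply]
  have hUcols : ∀ a b : Fin n, ∑ k, U k a * U k b = if a = b then 1 else 0 := by
    intro a b
    have h : (Uᵀ * U) a b = ∑ k, U k a * U k b := by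
      rw [Matrix.mul_apply]
      exact Finset.sum_congr rfl fun k _ => by rw [transpose_apply]
    rw [← h, hU, Matrix.one_apply]
  have hrowα : ∀ i, ∑ j, α i j ^ 2 ≤ 1 := by
    intro i
    by_cases hsi : s i = 0
    · have hz : ∀ j, α i j = 0 := fun j => by rw [hαdef, if_pos hsi]
      rw [Finset.sum_congr rfl fun j _ => by rw [hz j]]
      simp
    · have hb := bessel_sum (Finset.univ : Finset (Fin n))
        (fun j k => U k j) (fun k => w i k / s i)
        (fun a _ b _ hab => by rw [hUcols a b, if_neg hab])
        (fun a _ => by rw [hUcols a a, if_pos rfl])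
      have hform : ∀ j, α i j = ∑ k, (w i k / s i) * U k j := by
        intro j
        rw [hαdef, if_neg hsi, hγdef, Finset.sum_div]
        exact Finset.sum_congr rfl fun k _ => by ring
      have hnormw : ∑ k, (w i k / s i) ^ 2 = 1 := by
        have h := horthw i i
        rw [if_pos rfl] at h
        have hh : ∑ k, (w i k / s i) ^ 2 = (∑ k, w i k * w i k) / (s i ^ 2) := by
          rw [Finset.sum_div]
          exact Finset.sum_congr rfl fun k _ => by
            rw [div_pow, pow_two (w i k)]
        rw [hh, h, div_self (pow_ne_zero 2 hsi)]
      calc ∑ j, α i j ^ 2 = ∑ j, (∑ k, (w i k / s i) * U k j) ^ 2 :=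
            Finset.sum_congr rfl fun j _ => by rw [hform j]
        _ ≤ ∑ k, (w i k / s i) ^ 2 := hb
        _ = 1 := hnormw
  have hrowβ : ∀ i, ∑ j, β i j ^ 2 ≤ 1 := by
    intro i
    have hb := bessel_sum (Finset.univ : Finset (Fin n))
      (fun j l => V l j) (fun l => Q l i)
      (fun a _ b _ hab => by rw [hVcols a b, if_neg hab])
      (fun a _ => by rw [hVcols a a, if_pos rfl])
    have hq : ∑ l, (Q l i) ^ 2 = 1 := by
      have h := hQcols i i
      rw [if_pos rfl] at h
      rw [← h]
      exact Finset.sum_congr rfl fun l _ => (pow_two (Q l i))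
    calc ∑ j, β i j ^ 2 = ∑ j, (∑ l, Q l i * V l j) ^ 2 :=
          Finset.sum_congr rfl fun j _ => by rw [hβdef]
      _ ≤ ∑ l, (Q l i) ^ 2 := hb
      _ = 1 := hq
  have hcolβ : ∀ j, ∑ i, β i j ^ 2 ≤ 1 := by
    intro j
    have hb := bessel_sum (Finset.univ : Finset (Fin n))
      (fun i l => Q l i) (fun l => V l j)
      (fun a _ b _ hab => by rw [hQcols a b, if_neg hab])
      (fun a _ => by rw [hQcols a a, if_pos rfl])
    have hnv : ∑ l, (V l j) ^ 2 = 1 := by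
      have h := hVcols j j
      rw [if_pos rfl] at h
      rw [← h]
      exact Finset.sum_congr rfl fun l _ => (pow_two (V l j))
    calc ∑ i, β i j ^ 2 = ∑ i, (∑ l, V l j * Q l i) ^ 2 := by
          refine Finset.sum_congr rfl fun i _ => ?_
          rw [hβdef]
          congr 1
          exact Finset.sum_congr rfl fun l _ => mul_comm _ _
      _ ≤ ∑ l, (V l j) ^ 2 := hb
      _ = 1 := hnv
  have hcolα : ∀ j, ∑ i, α i j ^ 2 ≤ 1 := by
    intro j
    set T : Finset (Fin n) := Finset.univ.filter (fun i => s i ≠ 0) with hTdef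
    have hb := bessel_sum T (fun i k => w i k / s i) (fun k => U k j)
      (fun a ha b hbm hab => by
        have hsa : s a ≠ 0 := (Finset.mem_filter.mp ha).2
        have hsb : s b ≠ 0 := (Finset.mem_filter.mp hbm).2
        have h := horthw a b
        rw [if_neg hab] at h
        have hh : ∑ k, w a k / s a * (w b k / s b) = (∑ k, w a k * w b k) / (s a * s b) := by
          rw [Finset.sum_div]
          exact Finset.sum_congr rfl fun k _ => (div_mul_div_comm _ _ _ _)
        rw [hh, h, zero_div])
      (fun a ha => by
        have hsa : s a ≠ 0 := (Finset.mem_filter.mp ha).2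
        have h := horthw a a
        rw [if_pos rfl] at h
        have hh : ∑ k, w a k / s a * (w a k / s a) = (∑ k, w a k * w a k) / (s a ^ 2) := by
          rw [Finset.sum_div]
          refine Finset.sum_congr rfl fun k _ => ?_
          rw [div_mul_div_comm, pow_two]
        rw [hh, h, div_self (pow_ne_zero 2 hsa)])
    have hUnorm : ∑ k, (U k j) ^ 2 = 1 := by
      have h := hUcols j j
      rw [if_pos rfl] at h
      rw [← h]
      exact Finset.sum_congr rfl fun k _ => (pow_two (U k j))
    calc ∑ i, α i j ^ 2 = ∑ i ∈ T, α i j ^ 2 := by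
          rw [← Finset.sum_subset (Finset.subset_univ T)]
          intro x _ hx
          have hx0 : s x = 0 := by
            by_contra hc
            exact hx (Finset.mem_filter.mpr ⟨Finset.mem_univ x, hc⟩)
          rw [hαdef, if_pos hx0]
          norm_num
      _ = ∑ i ∈ T, (∑ k, U k j * (w i k / s i)) ^ 2 := by
          refine Finset.sum_congr rfl fun i hi => ?_
          have hsi : s i ≠ 0 := (Finset.mem_filter.mp hi).2
          rw [hαdef, if_neg hsi, hγdef, Finset.sum_div]
          congr 1
          exact Finset.sum_congr rfl fun k _ => by ring
      _ ≤ ∑ k, (U k j) ^ 2 := hb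
      _ = 1 := hUnorm
  have hCrow : ∀ i, ∑ j, C i j ≤ 1 := by
    intro i
    have hh : ∑ j, C i j = ((∑ j, α i j ^ 2) + (∑ j, β i j ^ 2)) / 2 := by
      rw [Finset.sum_congr rfl fun j _ => hCdef i j, ← Finset.sum_div,
        Finset.sum_add_distrib]
    rw [hh]
    linarith [hrowα i, hrowβ i]
  have hCcol : ∀ j, ∑ i, C i j ≤ 1 := by
    intro j
    have hh : ∑ i, C i j = ((∑ i, α i j ^ 2) + (∑ i, β i j ^ 2)) / 2 := by
      rw [Finset.sum_congr rfl fun i _ => hCdef i j, ← Finset.sum_div,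
        Finset.sum_add_distrib]
    rw [hh]
    linarith [hcolα j, hcolβ j]
  have hC0 : ∀ i j, 0 ≤ C i j := fun i j => by
    rw [hCdef]
    positivity
  calc ∑ k, ∑ l, X k l * (U * Matrix.diagonal σ * Vᵀ) k l
      = ∑ i, ∑ j, σ j * (γ i j * β i j) := hmain
    _ ≤ ∑ i, ∑ j, C i j * (s i * σ j) :=
        Finset.sum_le_sum fun i _ => Finset.sum_le_sum fun j _ => hterm i j
    _ ≤ ∑ i, s i * σ i := substochastic_fin s σ C hss hs0 hσs hσ0 hC0 hCrow hCcol
lemma spectral_real {n : ℕ} {A : Matrix (Fin n) (Fin n) ℝ} (hA : A.IsHermitian) :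
    ∃ W : Matrix (Fin n) (Fin n) ℝ, Wᵀ * W = 1 ∧
      A = W * Matrix.diagonal hA.eigenvalues * Wᵀ := by
  refine ⟨(hA.eigenvectorUnitary : Matrix (Fin n) (Fin n) ℝ), ?_, ?_⟩
  · rw [← conjTranspose_eq_transpose_of_trivial]
    exact hA.eigenvectorUnitary.prop.1
  · have := hA.spectral_theorem
    rwa [Unitary.conjStarAlgAut_apply, Matrix.star_eq_conjTranspose,
      conjTranspose_eq_transpose_of_trivial] at this

lemma sum_f_of_multiset_eq {n : ℕ} (f : ℝ → ℝ) (a b : Fin n → ℝ)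
    (h : Finset.univ.val.map a = Finset.univ.val.map b) :
    ∑ i, f (a i) = ∑ i, f (b i) := by
  have h2 : Finset.univ.val.map (f ∘ a) = Finset.univ.val.map (f ∘ b) := by
    rw [← Multiset.map_map, h, Multiset.map_map]
  calc ∑ i, f (a i) = (Finset.univ.val.map (f ∘ a)).sum := rfl
    _ = (Finset.univ.val.map (f ∘ b)).sum := by rw [h2]
    _ = ∑ i, f (b i) := rfl

/-- The proximal operator of the NNFN regularizer `λ(‖·‖_* - ‖·‖_F)` at `Z` is
obtained by applying the proximal operator of the `ℓ₁ - ℓ₂` penalty to the singular values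
of `Z`: if `Z = U ⬝ Diag(σ(Z)) ⬝ Vᵀ` is an SVD of `Z`, `0 < λ ≤ σ₁(Z)`, and `σ̃` globally
minimizes `σ ↦ (1/2)‖σ - σ(Z)‖₂² + λ(‖σ‖₁ - ‖σ‖₂)`, then `X̃ = U ⬝ Diag(σ̃) ⬝ Vᵀ` is a
global minimizer of `X ↦ (1/2)‖X - Z‖_F² + λ(‖X‖_* - ‖X‖_F)`. -/
theorem nnfn_prox_via_l1_minus_l2
    {m n : ℕ} (hmn : n ≤ m) (hn : 0 < n)
    (lam : ℝ)
    (Z U : Matrix (Fin m) (Fin n) ℝ) (V : Matrix (Fin n) (Fin n) ℝ)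
    (σ : Fin n → ℝ)
    (hU : Uᵀ * U = 1) (hV : Vᵀ * V = 1)
    (hSVD : Z = U * Matrix.diagonal σ * Vᵀ)
    (hσ_nonneg : ∀ i, 0 ≤ σ i)
    (hσ_sorted : ∀ i j : Fin n, i ≤ j → σ j ≤ σ i)
    (hlam_pos : 0 < lam) (hlam_le : lam ≤ σ ⟨0, hn⟩)
    (σt : Fin n → ℝ)
    (hσt_min : ∀ τ : Fin n → ℝ,
      (1 / 2) * (∑ i, (σt i - σ i) ^ 2)
          + lam * ((∑ i, |σt i|) - Real.sqrt (∑ i, (σt i) ^ 2))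
        ≤ (1 / 2) * (∑ i, (τ i - σ i) ^ 2)
          + lam * ((∑ i, |τ i|) - Real.sqrt (∑ i, (τ i) ^ 2))) :
    ∀ X : Matrix (Fin m) (Fin n) ℝ,
      (1 / 2) * (frobNorm (U * Matrix.diagonal σt * Vᵀ - Z)) ^ 2
          + lam * (nuclearNorm (U * Matrix.diagonal σt * Vᵀ)
              - frobNorm (U * Matrix.diagonal σt * Vᵀ))
        ≤ (1 / 2) * (frobNorm (X - Z)) ^ 2 + lam * (nuclearNorm X - frobNorm X) := by
  intro X
  classical
  have hfrob_sq : ∀ (A : Matrix (Fin m) (Fin n) ℝ),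
      (frobNorm A) ^ 2 = ∑ i, ∑ j, (A i j) ^ 2 := by
    intro A
    rw [frobNorm, Real.sq_sqrt]
    exact Finset.sum_nonneg fun i _ => Finset.sum_nonneg fun j _ => sq_nonneg _
  -- LHS computations
  have hsubfact : U * Matrix.diagonal σt * Vᵀ - Z
      = U * Matrix.diagonal (fun i => σt i - σ i) * Vᵀ := by
    rw [hSVD, ← Matrix.sub_mul, ← Matrix.mul_sub, Matrix.diagonal_sub]
  have hLfrob : (frobNorm (U * Matrix.diagonal σt * Vᵀ - Z)) ^ 2
      = ∑ i, (σt i - σ i) ^ 2 := by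
    rw [hfrob_sq, hsubfact, frob_sq_UDV U V hU hV]
  have hLfrob2 : frobNorm (U * Matrix.diagonal σt * Vᵀ) = Real.sqrt (∑ i, (σt i) ^ 2) := by
    rw [frobNorm, frob_sq_UDV U V hU hV]
  have hLnuc : nuclearNorm (U * Matrix.diagonal σt * Vᵀ) = ∑ i, |σt i| := by
    have hgram : (U * Matrix.diagonal σt * Vᵀ)ᵀ * (U * Matrix.diagonal σt * Vᵀ)
        = V * Matrix.diagonal (fun i => σt i * σt i) * Vᵀ := UDV_gram U V hU σt σt
    have hms := eigenvalues_multiset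
      (Matrix.isHermitian_conjTranspose_mul_self (U * Matrix.diagonal σt * Vᵀ)) V
      (fun i => σt i * σt i) hV hgram
    rw [nuclearNorm, sum_f_of_multiset_eq Real.sqrt _ _ hms]
    exact Finset.sum_congr rfl fun i _ => Real.sqrt_mul_self_eq_abs (σt i)
  -- RHS : spectral decomposition and sorted singular values of X
  have hXH := Matrix.isHermitian_conjTranspose_mul_self X
  have hμ0 : ∀ i, 0 ≤ hXH.eigenvalues i := fun i =>
    Matrix.eigenvalues_conjTranspose_mul_self_nonneg X i
  obtain ⟨W, hWo, hWspec⟩ := spectral_real hXH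
  have hWspec' : Xᵀ * X = W * Matrix.diagonal hXH.eigenvalues * Wᵀ := hWspec
  set μ := hXH.eigenvalues with hμ
  set g : Fin n → ℝ := fun i => -Real.sqrt (μ i) with hg
  set π := Tuple.sort g with hπ
  set s : Fin n → ℝ := fun i => Real.sqrt (μ (π i)) with hsdef
  have hs0 : ∀ i, 0 ≤ s i := fun i => Real.sqrt_nonneg _
  have hss : ∀ i j : Fin n, i ≤ j → s j ≤ s i := by
    intro i j hij
    have h := Tuple.monotone_sort g hij
    simp only [Function.comp_apply, hg] at h
    exact neg_le_neg_iff.mp h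
  have hssq : ∀ i, s i ^ 2 = μ (π i) := fun i => Real.sq_sqrt (hμ0 _)
  set Q : Matrix (Fin n) (Fin n) ℝ := Matrix.of (fun k i => W k (π i)) with hQdef
  have hQo : Qᵀ * Q = 1 := by
    ext a b
    have h : (Wᵀ * W) (π a) (π b) = (1 : Matrix (Fin n) (Fin n) ℝ) (π a) (π b) := by
      rw [hWo]
    rw [Matrix.mul_apply] at h
    rw [Matrix.mul_apply, Matrix.one_apply]
    rw [Matrix.one_apply] at h
    have hl : ∑ k, Qᵀ a k * Q k b = ∑ k, Wᵀ (π a) k * W k (π b) := by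
      refine Finset.sum_congr rfl fun k _ => ?_
      rw [transpose_apply, transpose_apply, hQdef]
      rfl
    rw [hl, h]
    by_cases hab : a = b
    · rw [if_pos hab, if_pos (by rw [hab])]
    · rw [if_neg hab, if_neg (fun hc => hab (π.injective hc))]
  have hP : Wᵀ * Q = Matrix.of (fun a b => if a = π b then (1 : ℝ) else 0) := by
    ext a b
    have h : (Wᵀ * W) a (π b) = (1 : Matrix (Fin n) (Fin n) ℝ) a (π b) := by rw [hWo]
    rw [Matrix.mul_apply] at h
    rw [Matrix.mul_apply]
    have hl : ∑ k, Wᵀ a k * Q k b = ∑ k, Wᵀ a k * W k (π b) := by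
      refine Finset.sum_congr rfl fun k _ => ?_
      rw [hQdef]
      rfl
    rw [hl, h, Matrix.one_apply]
    rfl
  have hAQ : (Xᵀ * X) * Q = Q * Matrix.diagonal (fun i => s i ^ 2) := by
    rw [hWspec', Matrix.mul_assoc, Matrix.mul_assoc, hP]
    ext k b
    rw [Matrix.mul_apply]
    have hterm : ∀ a, W k a
        * ((Matrix.diagonal μ * Matrix.of (fun a b => if a = π b then (1 : ℝ) else 0)) a b)
        = if a = π b then W k a * μ a else 0 := by
      intro a
      rw [Matrix.diagonal_mul]
      by_cases h : a = π b <;> simp [h]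
    rw [Finset.sum_congr rfl fun a _ => hterm a, Finset.sum_ite_eq' Finset.univ (π b),
      if_pos (Finset.mem_univ _), Matrix.mul_diagonal, hssq b, hQdef]
    rfl
  have hgramX : Qᵀ * (Xᵀ * X) * Q = Matrix.diagonal (fun i => s i ^ 2) := by
    rw [Matrix.mul_assoc, hAQ, ← Matrix.mul_assoc, hQo, Matrix.one_mul]
  -- nuclear norm of X
  have hnucX : nuclearNorm X = ∑ i, s i := by
    rw [nuclearNorm]
    exact (Equiv.sum_comp π (fun i => Real.sqrt (μ i))).symm
  have hfrobX2 : ∑ i, ∑ j, (X i j) ^ 2 = ∑ i, (s i) ^ 2 := by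
    rw [sum_sq_eq_trace, hWspec', Matrix.trace_mul_cycle, hWo, Matrix.one_mul, trace_diagonal]
    calc ∑ i, μ i = ∑ i, μ (π i) := (Equiv.sum_comp π μ).symm
      _ = ∑ i, (s i) ^ 2 := Finset.sum_congr rfl fun i _ => (hssq i).symm
  have hfrobX : frobNorm X = Real.sqrt (∑ i, (s i) ^ 2) := by rw [frobNorm, hfrobX2]
  have hfrobZsq : ∑ i, ∑ j, (Z i j) ^ 2 = ∑ i, (σ i) ^ 2 := by
    rw [hSVD]
    exact frob_sq_UDV U V hU hV σ
  have hinner : ∑ k, ∑ l, X k l * Z k l ≤ ∑ i, s i * σ i := by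
    rw [hSVD]
    exact von_neumann_core X U V Q σ s hU hV hQo hσ_nonneg hσ_sorted hs0 hss hgramX
  have hfrobXZ : (frobNorm (X - Z)) ^ 2
      = ∑ i, ∑ j, (X i j) ^ 2 - 2 * (∑ k, ∑ l, X k l * Z k l) + ∑ i, ∑ j, (Z i j) ^ 2 := by
    rw [hfrob_sq]
    exact sub_sq_sum X Z
  have hmin := hσt_min s
  rw [Finset.sum_congr rfl fun i _ => abs_of_nonneg (hs0 i)] at hmin
  calc (1 / 2) * (frobNorm (U * Matrix.diagonal σt * Vᵀ - Z)) ^ 2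
        + lam * (nuclearNorm (U * Matrix.diagonal σt * Vᵀ)
            - frobNorm (U * Matrix.diagonal σt * Vᵀ))
      = (1 / 2) * (∑ i, (σt i - σ i) ^ 2)
          + lam * ((∑ i, |σt i|) - Real.sqrt (∑ i, (σt i) ^ 2)) := by
        rw [hLfrob, hLnuc, hLfrob2]
    _ ≤ (1 / 2) * (∑ i, (s i - σ i) ^ 2)
          + lam * ((∑ i, s i) - Real.sqrt (∑ i, (s i) ^ 2)) := hmin
    _ ≤ (1 / 2) * (frobNorm (X - Z)) ^ 2 + lam * (nuclearNorm X - frobNorm X) := by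
        rw [hnucX, hfrobX, hfrobXZ, hfrobZsq, hfrobX2, vec_sub_sq_sum s σ]
        linarith [hinner]
end

section
/- Let λ > 0 and let z ∈ ℝ^m satisfy z₁ ≥ z₂ ≥ … ≥ z_m ≥ 0. Then every global minimizer σ̃ of σ ↦ (1/2)‖σ − z‖₂² + λ(‖σ‖₁ − ‖σ‖₂) satisfies 0 ≤ σ̃ᵢ ≤ zᵢ for every i (shrinkage: the proximal operator of the ℓ₁-minus-ℓ₂ penalty never increases any component of a sorted non-negative input). -/
private lemma sqrt_minkowski {m : ℕ} (a b : Fin m → ℝ) :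
    Real.sqrt (∑ i, (a i + b i) ^ 2) ≤
      Real.sqrt (∑ i, (a i) ^ 2) + Real.sqrt (∑ i, (b i) ^ 2) := by
  have := norm_add_le (E := EuclideanSpace ℝ (Fin m)) (WithLp.toLp 2 a) (WithLp.toLp 2 b)
  simp only [EuclideanSpace.norm_eq, Real.norm_eq_abs, sq_abs] at this
  simpa using this

private lemma key_step {m : ℕ} (lam : ℝ) (hlam : 0 < lam)
    (z σt : Fin m → ℝ) (i : Fin m) (c : ℝ)
    (h1 : (c - z i) ^ 2 < (σt i - z i) ^ 2)
    (h2 : |c| + |σt i - c| ≤ |σt i|)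
    (hmin : ∀ τ : Fin m → ℝ,
      (1 / 2) * (∑ i, (σt i - z i) ^ 2)
          + lam * ((∑ i, |σt i|) - Real.sqrt (∑ i, (σt i) ^ 2))
        ≤ (1 / 2) * (∑ i, (τ i - z i) ^ 2)
          + lam * ((∑ i, |τ i|) - Real.sqrt (∑ i, (τ i) ^ 2))) : False := by
  set τ := Function.update σt i c with hτ
  have hτi : τ i = c := by simp [hτ]
  have hτj : ∀ j, j ≠ i → τ j = σt j := by
    intro j hj; simp [hτ, Function.update_of_ne hj]
  -- difference of quadratic sums
  have hA : (∑ j, (τ j - z j) ^ 2) - (∑ j, (σt j - z j) ^ 2)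
      = (c - z i) ^ 2 - (σt i - z i) ^ 2 := by
    rw [← Finset.sum_sub_distrib]
    rw [Finset.sum_eq_single i]
    · rw [hτi]
    · intro j _ hj; rw [hτj j hj]; ring
    · intro h; exact absurd (Finset.mem_univ i) h
  -- difference of l1 sums
  have hL : (∑ j, |τ j|) - (∑ j, |σt j|) = |c| - |σt i| := by
    rw [← Finset.sum_sub_distrib]
    rw [Finset.sum_eq_single i]
    · rw [hτi]
    · intro j _ hj; rw [hτj j hj]; ring
    · intro h; exact absurd (Finset.mem_univ i) h
  -- sqrt difference bound
  have hdiff : (∑ j, (σt j - τ j) ^ 2) = (σt i - c) ^ 2 := by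
    rw [Finset.sum_eq_single i]
    · rw [hτi]
    · intro j _ hj; rw [hτj j hj]; ring
    · intro h; exact absurd (Finset.mem_univ i) h
  have hQ : Real.sqrt (∑ j, (σt j) ^ 2)
      ≤ Real.sqrt (∑ j, (τ j) ^ 2) + |σt i - c| := by
    have := sqrt_minkowski τ (fun j => σt j - τ j)
    simp only [add_sub_cancel] at this
    calc Real.sqrt (∑ j, (σt j) ^ 2)
        ≤ Real.sqrt (∑ j, (τ j) ^ 2) + Real.sqrt (∑ j, (σt j - τ j) ^ 2) := this
      _ = Real.sqrt (∑ j, (τ j) ^ 2) + |σt i - c| := by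
          rw [hdiff, Real.sqrt_sq_eq_abs]
  have h := hmin τ
  nlinarith [hQ, h, hA, hL, h1, h2, hlam, abs_nonneg (σt i - c)]

/-- shrinkage: If `λ > 0`, `z₁ ≥ z₂ ≥ … ≥ z_m ≥ 0`, and `σ̃` globally
minimizes `σ ↦ (1/2)‖σ - z‖₂² + λ(‖σ‖₁ - ‖σ‖₂)`, then `0 ≤ σ̃ᵢ ≤ zᵢ` for every `i`. -/
theorem l1_minus_l2_prox_shrinkage
    {m : ℕ} (lam : ℝ) (hlam : 0 < lam)
    (z : Fin m → ℝ)
    (hz_nonneg : ∀ i, 0 ≤ z i)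
    (hz_sorted : ∀ i j : Fin m, i ≤ j → z j ≤ z i)
    (σt : Fin m → ℝ)
    (hσt_min : ∀ τ : Fin m → ℝ,
      (1 / 2) * (∑ i, (σt i - z i) ^ 2)
          + lam * ((∑ i, |σt i|) - Real.sqrt (∑ i, (σt i) ^ 2))
        ≤ (1 / 2) * (∑ i, (τ i - z i) ^ 2)
          + lam * ((∑ i, |τ i|) - Real.sqrt (∑ i, (τ i) ^ 2))) :
    ∀ i : Fin m, 0 ≤ σt i ∧ σt i ≤ z i := by
  intro i
  by_contra hcon
  push_neg at hcon
  rcases lt_or_ge (σt i) 0 with hneg | hpos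
  · -- σt i < 0 : use c = 0
    refine key_step lam hlam z σt i 0 ?_ ?_ hσt_min
    · have hzi := hz_nonneg i
      nlinarith
    · rw [abs_zero, sub_zero]; simp
  · -- σt i > z i : use c = z i
    have hgt : z i < σt i := hcon hpos
    refine key_step lam hlam z σt i (z i) ?_ ?_ hσt_min
    · nlinarith
    · rw [abs_of_nonneg (hz_nonneg i), abs_of_pos (lt_of_le_of_lt (hz_nonneg i) hgt),
        abs_of_pos (by linarith : (0:ℝ) < σt i - z i)]
      linarith
end

section
/- Let X ∈ ℝ^{m×n} have rank at most k. Then there exist W ∈ ℝ^{m×k} and H ∈ ℝ^{n×k} such that X = W Hᵀ and (1/2)(‖W‖_F² + ‖H‖_F²) = ‖X‖_*. -/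
open scoped Matrix

open Finset in
private lemma sum_partialInv_elim {α : Type*} [Fintype α] {k : ℕ} (e : α ↪ Fin k) (F : α → ℝ) :
    ∑ c : Fin k, Option.elim (Function.partialInv (⇑e) c) 0 F = ∑ j, F j := by
  classical
  calc ∑ c : Fin k, Option.elim (Function.partialInv (⇑e) c) 0 F
      = ∑ c ∈ Finset.univ.image e, Option.elim (Function.partialInv (⇑e) c) 0 F := by
        refine (Finset.sum_subset (Finset.subset_univ _) fun c _ hc => ?_).symm
        have hne : ¬ ∃ a, e a = c := by
          rintro ⟨a, rfl⟩; exact hc (Finset.mem_image_of_mem _ (Finset.mem_univ a))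
        simp [Function.partialInv, hne]
    _ = ∑ j, Option.elim (Function.partialInv (⇑e) (e j)) 0 F :=
        Finset.sum_image (fun x _ y _ h => e.injective h)
    _ = ∑ j, F j := Finset.sum_congr rfl fun j _ => by
        rw [Function.partialInv_left e.injective]; rfl


/-- If `X ∈ ℝ^{m×n}` has rank at most `k`, then there exist `W ∈ ℝ^{m×k}`
and `H ∈ ℝ^{n×k}` with `X = W Hᵀ` and `(1/2)(‖W‖_F² + ‖H‖_F²) = ‖X‖_*`. -/
theorem exists_factorization_achieving_nuclearNorm
    {m n : ℕ} (k : ℕ) (X : Matrix (Fin m) (Fin n) ℝ) (hX : X.rank ≤ k) :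
    ∃ (W : Matrix (Fin m) (Fin k) ℝ) (H : Matrix (Fin n) (Fin k) ℝ),
      X = W * Hᵀ ∧ (1 / 2) * ((frobNorm W) ^ 2 + (frobNorm H) ^ 2) = nuclearNorm X := by
  classical
  set hA := Matrix.isHermitian_conjTranspose_mul_self X with hAdef
  set d : Fin n → ℝ := hA.eigenvalues with hd
  set v : Fin n → Fin n → ℝ := fun j => ⇑(hA.eigenvectorBasis j) with hv
  have hd0 : ∀ j, 0 ≤ d j :=
    fun j => (Matrix.posSemidef_conjTranspose_mul_self X).eigenvalues_nonneg j
  have hvv : ∀ i j, ∑ p, v i p * v j p = if i = j then 1 else 0 := by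
    intro i j
    have h := orthonormal_iff_ite.mp hA.eigenvectorBasis.orthonormal i j
    simpa [PiLp.inner_apply, RCLike.inner_apply, hv, mul_comm] using h
  have heig : ∀ j, (Xᴴ * X) *ᵥ v j = d j • v j := fun j => hA.mulVec_eigenvectorBasis j
  have hkey : ∀ j, ∑ p, (X *ᵥ v j) p ^ 2 = d j := by
    intro j
    have h1 : ∑ p, (X *ᵥ v j) p ^ 2 = dotProduct (X *ᵥ v j) (X *ᵥ v j) := by
      simp [dotProduct, pow_two]
    have h2 : dotProduct (v j) ((Xᴴ * X) *ᵥ v j)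
        = dotProduct (X *ᵥ v j) (X *ᵥ v j) := by
      rw [← Matrix.mulVec_mulVec, Matrix.dotProduct_mulVec,
        Matrix.conjTranspose_eq_transpose_of_trivial, Matrix.vecMul_transpose]
    rw [h1, ← h2, heig j]
    simp only [dotProduct, Pi.smul_apply, smul_eq_mul]
    rw [show ∑ p, v j p * (d j * v j p) = d j * ∑ p, v j p * v j p by
      rw [Finset.mul_sum]; exact Finset.sum_congr rfl fun p _ => by ring]
    simp [hvv j j]
  have hXv0 : ∀ j, d j = 0 → ∀ p, (X *ᵥ v j) p = 0 := by
    intro j hj p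
    have h := hkey j
    rw [hj] at h
    have := (Finset.sum_eq_zero_iff_of_nonneg (fun p _ => sq_nonneg ((X *ᵥ v j) p))).mp h p
      (Finset.mem_univ p)
    exact pow_eq_zero_iff (by norm_num) |>.mp this
  have hcomp : ∀ r q, ∑ j, v j r * v j q = if r = q then 1 else 0 := by
    intro r q
    have hU := Matrix.mem_unitaryGroup_iff.mp (hA.eigenvectorUnitary).2
    have h := congrFun (congrFun hU r) q
    simpa [Matrix.mul_apply, Matrix.one_apply, Matrix.star_apply, hv] using h
  -- the embedding
  have hcard : Fintype.card {j : Fin n // d j ≠ 0} ≤ Fintype.card (Fin k) := by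
    rw [Fintype.card_fin]
    calc Fintype.card {j : Fin n // d j ≠ 0} = X.rank := by
          rw [← Matrix.rank_conjTranspose_mul_self X, hA.rank_eq_card_non_zero_eigs]
      _ ≤ k := hX
  obtain ⟨e⟩ : Nonempty ({j : Fin n // d j ≠ 0} ↪ Fin k) :=
    Function.Embedding.nonempty_of_card_le hcard
  have hdpos : ∀ j : {j : Fin n // d j ≠ 0}, 0 < d j.1 :=
    fun j => lt_of_le_of_ne (hd0 j.1) (Ne.symm j.2)
  have hspos : ∀ j : {j : Fin n // d j ≠ 0}, 0 < Real.sqrt (Real.sqrt (d j.1)) :=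
    fun j => Real.sqrt_pos.mpr (Real.sqrt_pos.mpr (hdpos j))
  set W : Matrix (Fin m) (Fin k) ℝ := Matrix.of (fun p c => Option.elim (Function.partialInv (⇑e) c) 0
      (fun j => (X *ᵥ v j.1) p / Real.sqrt (Real.sqrt (d j.1)))) with hWdef
  set H : Matrix (Fin n) (Fin k) ℝ := Matrix.of (fun q c => Option.elim (Function.partialInv (⇑e) c) 0
      (fun j => Real.sqrt (Real.sqrt (d j.1)) * v j.1 q)) with hHdef
  refine ⟨W, H, ?_, ?_⟩
  · -- factorization
    ext p q
    rw [Matrix.mul_apply]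
    rw [hWdef, hHdef]
    have hterm : ∀ c : Fin k,
        (Matrix.of (fun p c => Option.elim (Function.partialInv (⇑e) c) 0
            (fun j => (X *ᵥ v j.1) p / Real.sqrt (Real.sqrt (d j.1))))) p c *
          (Matrix.of (fun q c => Option.elim (Function.partialInv (⇑e) c) 0
            (fun j => Real.sqrt (Real.sqrt (d j.1)) * v j.1 q)))ᵀ c q
          = Option.elim (Function.partialInv (⇑e) c) 0
            (fun j : {j : Fin n // d j ≠ 0} => (X *ᵥ v j.1) p * v j.1 q) := by
      intro c
      simp only [Matrix.transpose_apply, Matrix.of_apply]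
      cases hc : Function.partialInv (⇑e) c with
      | none => simp
      | some j =>
        simp only [Option.elim]
        have hs := (hspos j).ne'
        field_simp
    rw [Finset.sum_congr rfl fun c _ => hterm c, sum_partialInv_elim]
    have hfull : ∑ j : Fin n, (X *ᵥ v j) p * v j q = X p q := by
      calc ∑ j, (X *ᵥ v j) p * v j q = ∑ j, ∑ r, X p r * v j r * v j q := by
            simp [Matrix.mulVec, dotProduct, Finset.sum_mul]
        _ = ∑ r, X p r * ∑ j, v j r * v j q := by
            rw [Finset.sum_comm]
            exact Finset.sum_congr rfl fun r _ => by
              rw [Finset.mul_sum]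
              exact Finset.sum_congr rfl fun j _ => by ring
        _ = X p q := by simp [hcomp, mul_ite]
    rw [← hfull]
    rw [← Finset.sum_subtype (Finset.univ.filter (fun j => d j ≠ 0))
      (fun j => by simp) (fun j => (X *ᵥ v j) p * v j q)]
    refine (Finset.sum_subset (Finset.filter_subset _ _) fun j _ hj => ?_).symm
    have hdj : d j = 0 := by
      by_contra h
      exact hj (Finset.mem_filter.mpr ⟨Finset.mem_univ j, h⟩)
    rw [hXv0 j hdj p, zero_mul]
  · have hnn : ∀ (N : ℕ) (M : Matrix (Fin N) (Fin k) ℝ),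
        frobNorm M ^ 2 = ∑ c, ∑ p, M p c ^ 2 := by
      intro N M
      simp only [frobNorm]
      rw [Real.sq_sqrt (by positivity), Finset.sum_comm]
    have hWsq : frobNorm W ^ 2 = ∑ j : {j : Fin n // d j ≠ 0}, Real.sqrt (d j.1) := by
      rw [hnn, ← sum_partialInv_elim e (fun j => Real.sqrt (d j.1))]
      refine Finset.sum_congr rfl fun c _ => ?_
      rw [hWdef]
      simp only [Matrix.of_apply]
      cases hc : Function.partialInv (⇑e) c with
      | none => simp
      | some j =>
        simp only [Option.elim]
        have h2 : Real.sqrt (Real.sqrt (d j.1)) ^ 2 = Real.sqrt (d j.1) :=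
          Real.sq_sqrt (Real.sqrt_nonneg _)
        calc ∑ p, ((X *ᵥ v j.1) p / Real.sqrt (Real.sqrt (d j.1))) ^ 2
            = (∑ p, (X *ᵥ v j.1) p ^ 2) / Real.sqrt (Real.sqrt (d j.1)) ^ 2 := by
              rw [Finset.sum_div]
              exact Finset.sum_congr rfl fun p _ => div_pow _ _ _
          _ = d j.1 / Real.sqrt (d j.1) := by rw [hkey, h2]
          _ = Real.sqrt (d j.1) := by
              rw [div_eq_iff (Real.sqrt_pos.mpr (hdpos j)).ne']
              exact (Real.mul_self_sqrt (hd0 j.1)).symm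
    have hHsq : frobNorm H ^ 2 = ∑ j : {j : Fin n // d j ≠ 0}, Real.sqrt (d j.1) := by
      rw [hnn, ← sum_partialInv_elim e (fun j => Real.sqrt (d j.1))]
      refine Finset.sum_congr rfl fun c _ => ?_
      rw [hHdef]
      simp only [Matrix.of_apply]
      cases hc : Function.partialInv (⇑e) c with
      | none => simp
      | some j =>
        simp only [Option.elim]
        have h2 : Real.sqrt (Real.sqrt (d j.1)) ^ 2 = Real.sqrt (d j.1) :=
          Real.sq_sqrt (Real.sqrt_nonneg _)
        calc ∑ q, (Real.sqrt (Real.sqrt (d j.1)) * v j.1 q) ^ 2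
            = Real.sqrt (Real.sqrt (d j.1)) ^ 2 * ∑ q, v j.1 q * v j.1 q := by
              rw [Finset.mul_sum]
              exact Finset.sum_congr rfl fun q _ => by ring
          _ = Real.sqrt (d j.1) := by rw [h2, hvv j.1 j.1]; simp
    have hnuc : nuclearNorm X = ∑ j : {j : Fin n // d j ≠ 0}, Real.sqrt (d j.1) := by
      simp only [nuclearNorm]
      rw [← Finset.sum_subtype (Finset.univ.filter (fun j => d j ≠ 0))
        (fun j => by simp) (fun j => Real.sqrt (d j))]
      refine (Finset.sum_subset (Finset.filter_subset _ _) fun j _ hj => ?_).symm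
      have hdj : d j = 0 := by
        by_contra h
        exact hj (Finset.mem_filter.mpr ⟨Finset.mem_univ j, h⟩)
      rw [show (Matrix.isHermitian_conjTranspose_mul_self X).eigenvalues j = d j from rfl, hdj,
        Real.sqrt_zero]
    rw [hWsq, hHsq, hnuc]
    ring
end
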